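/- Let N be a normal subgroup of a finite group G, let ρ be an irreducible representation of G and τ an irreducible representation of N with characters χ_ρ, χ_τ such that τ occurs in the restriction of ρ to N. Suppose x ∈ N is such that the G-conjugacy class of x is a single N-conjugacy class (does not split in N). Then χ_ρ(x) = m · χ_τ(x) for some positive integer m. In particular, χ_ρ(x) ≠ 0 if and only if χ_τ(x) ≠ 0. -/

import Mathlib

open CategoryTheory Module

noncomputable section CliffordAux

set_option linter.unusedSectionVars false

namespace CliffordAux

variable {H : Type} [Group H] [Fintype H]

open Matrix in
lemma char_inv_eq_conj (W : FDRep ℂ H) (h : H) :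
    W.character h⁻¹ = (starRingEnd ℂ) (W.character h) := by
  classical
  open scoped ComplexOrder in
  let b := Module.finBasis ℂ W
  let A : H → Matrix _ _ ℂ := fun g => LinearMap.toMatrix b b (W.ρ g)
  have hAmul : ∀ g₁ g₂, A (g₁ * g₂) = A g₁ * A g₂ := by
    intro g₁ g₂
    simp only [A, _root_.map_mul, LinearMap.toMatrix_mul b]
  have hA1 : A 1 = 1 := by simp [A]
  have hchar : ∀ g, W.character g = (A g).trace := fun g =>
    LinearMap.trace_eq_matrix_trace ℂ b (W.ρ g)
  set M : Matrix _ _ ℂ := ∑ g : H, (A g)ᴴ * A g with hM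
  have hsum_mulVec : ∀ v, M *ᵥ v = ∑ g : H, ((A g)ᴴ * A g) *ᵥ v := by
    intro v
    rw [hM]
    ext j
    simp only [Matrix.mulVec, dotProduct, Matrix.sum_apply, Finset.sum_apply,
      Finset.sum_mul]
    rw [Finset.sum_comm]
  -- key identity
  have key : ∀ g, (A g)ᴴ * M * A g = M := by
    intro g
    have : (A g)ᴴ * M * A g = ∑ s : H, (A (s * g))ᴴ * A (s * g) := by
      rw [hM, Finset.mul_sum, Finset.sum_mul]
      refine Finset.sum_congr rfl fun s _ => ?_
      rw [hAmul]
      simp [Matrix.conjTranspose_mul, Matrix.mul_assoc]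
    rw [this, hM]
    exact Fintype.sum_bijective (· * g) (Group.mulRight_bijective g) _ _ (fun s => rfl)
  -- M is invertible
  have hMdet : M.det ≠ 0 := by
    intro hdet
    obtain ⟨v, hv0, hv⟩ := (Matrix.exists_mulVec_eq_zero_iff).2 hdet
    have h0 : (0:ℂ) = ∑ g : H, star (A g *ᵥ v) ⬝ᵥ (A g *ᵥ v) := by
      have : star v ⬝ᵥ (M *ᵥ v) = 0 := by rw [hv, dotProduct_zero]
      rw [← this, hsum_mulVec]
      have hds : star v ⬝ᵥ (∑ g : H, ((A g)ᴴ * A g) *ᵥ v)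
          = ∑ g : H, star v ⬝ᵥ (((A g)ᴴ * A g) *ᵥ v) := by
        simp only [dotProduct, Finset.sum_apply, Finset.mul_sum]
        exact Finset.sum_comm
      rw [hds]
      refine Finset.sum_congr rfl fun g _ => ?_
      rw [← Matrix.mulVec_mulVec, dotProduct_mulVec, Matrix.vecMul_conjTranspose,
        star_star, dotProduct_comm]
    have hzero : ∀ g : H, star (A g *ᵥ v) ⬝ᵥ (A g *ᵥ v) = 0 := by
      intro g
      refine (Finset.sum_eq_zero_iff_of_nonneg fun g _ =>
        dotProduct_star_self_nonneg _).1 h0.symm g (Finset.mem_univ g)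
    have := hzero 1
    rw [hA1, Matrix.one_mulVec] at this
    exact hv0 (dotProduct_star_self_eq_zero.1 this)
  -- trace identity
  have hBA : A h⁻¹ * A h = 1 := by rw [← hAmul, inv_mul_cancel, hA1]
  have hAB : A h * A h⁻¹ = 1 := by rw [← hAmul, mul_inv_cancel, hA1]
  have hkey2 : (A h)ᴴ * M = M * A h⁻¹ := by
    calc (A h)ᴴ * M = (A h)ᴴ * M * (A h * A h⁻¹) := by rw [hAB, Matrix.mul_one]
    _ = ((A h)ᴴ * M * A h) * A h⁻¹ := by rw [Matrix.mul_assoc ((A h)ᴴ * M)]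
    _ = M * A h⁻¹ := by rw [key]
  have htr : ((A h)ᴴ).trace = (A h⁻¹).trace := by
    calc ((A h)ᴴ).trace = ((A h)ᴴ * (M * M⁻¹)).trace := by
          rw [Matrix.mul_nonsing_inv M (isUnit_iff_ne_zero.2 hMdet), Matrix.mul_one]
    _ = (((A h)ᴴ * M) * M⁻¹).trace := by rw [Matrix.mul_assoc]
    _ = (M⁻¹ * ((A h)ᴴ * M)).trace := by rw [Matrix.trace_mul_comm]
    _ = (M⁻¹ * (M * A h⁻¹)).trace := by rw [hkey2]
    _ = ((M⁻¹ * M) * A h⁻¹).trace := by rw [Matrix.mul_assoc]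
    _ = (A h⁻¹).trace := by rw [Matrix.nonsing_inv_mul M (isUnit_iff_ne_zero.2 hMdet),
          Matrix.one_mul]
  rw [hchar, hchar, ← htr, Matrix.trace_conjTranspose]
  rfl

/-- The subrepresentation on an invariant submodule. -/
def subRep (W : FDRep ℂ H) (p : Submodule ℂ W)
    (hp : ∀ h : H, ∀ v ∈ p, W.ρ h v ∈ p) : Representation ℂ H p where
  toFun h := (W.ρ h).restrict (fun v hv => hp h v hv)
  map_one' := by ext v; simp [LinearMap.restrict_apply]
  map_mul' g h := by ext v; simp [LinearMap.restrict_apply]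

lemma invariant_submodule_eq_bot_or_top (W : FDRep ℂ H) (hW : Simple W)
    (p : Submodule ℂ W) (hp : ∀ h : H, ∀ v ∈ p, W.ρ h v ∈ p) :
    p = ⊥ ∨ p = ⊤ := by
  by_cases hbot : p = ⊥
  · exact Or.inl hbot
  right
  obtain ⟨v, hvp, hv0⟩ := Submodule.exists_mem_ne_zero_of_ne_bot hbot
  let X : FDRep ℂ H := FDRep.of (subRep W p hp)
  let i : X ⟶ W := ⟨FGModuleCat.ofHom p.subtype, fun h => rfl⟩
  have hinj : Function.Injective i.hom := Subtype.coe_injective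
  have : Mono i := by
    constructor
    intro Z f g hfg
    ext z
    exact congrArg Subtype.val (hinj (congrArg (fun (q : Z ⟶ W) => q.hom z) hfg))
  have hne : i ≠ 0 := by
    intro h0
    apply hv0
    have : i.hom ⟨v, hvp⟩ = (0 : X ⟶ W).hom ⟨v, hvp⟩ := by rw [h0]
    exact this
  have : IsIso i := isIso_of_mono_of_nonzero hne
  have hsurj : Function.Surjective i.hom := by
    intro w
    refine ⟨(inv i).hom w, ?_⟩
    have h1 : (inv i).hom ≫ i.hom = 𝟙 W.V := by rw [← Action.comp_hom, IsIso.inv_hom_id]; rfl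
    calc i.hom ((inv i).hom w) = ((inv i).hom ≫ i.hom) w := rfl
    _ = w := by rw [h1]; rfl
  have : Submodule.map p.subtype ⊤ = ⊤ := by
    rw [Submodule.map_top, Submodule.range_subtype]
    exact Submodule.eq_top_iff'.2 fun w => by obtain ⟨u, hu⟩ := hsurj w; exact hu ▸ u.2
  rw [Submodule.map_top, Submodule.range_subtype] at this
  exact this

lemma nontrivial_of_simple (W : FDRep ℂ H) (hW : Simple W) : Nontrivial W := by
  by_contra hnt
  have hsub : Subsingleton W := not_nontrivial_iff_subsingleton.mp hnt
  haveI : Subsingleton ((forget (FGModuleCat ℂ)).obj W.V) := hsub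
  exact id_nonzero W (by ext v; exact Subsingleton.elim _ _)

lemma finrank_pos_of_simple (W : FDRep ℂ H) (hW : Simple W) : 0 < finrank ℂ W := by
  have := nontrivial_of_simple W hW
  exact finrank_pos

lemma commuting_endo_scalar (W : FDRep ℂ H) (hW : Simple W) (u : W →ₗ[ℂ] W)
    (hu : ∀ h : H, W.ρ h ∘ₗ u = u ∘ₗ W.ρ h) : ∃ c : ℂ, u = c • LinearMap.id := by
  have hnt : Nontrivial W := nontrivial_of_simple W hW
  obtain ⟨c, hc⟩ := Module.End.exists_eigenvalue u
  refine ⟨c, ?_⟩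
  have hinv : ∀ h : H, ∀ v ∈ Module.End.eigenspace u c,
      W.ρ h v ∈ Module.End.eigenspace u c := by
    intro h v hv
    rw [Module.End.mem_eigenspace_iff] at hv ⊢
    calc u (W.ρ h v) = W.ρ h (u v) := by
          have := congrArg (fun (f : W →ₗ[ℂ] W) => f v) (hu h)
          exact this.symm
    _ = c • W.ρ h v := by rw [hv, map_smul]
  rcases invariant_submodule_eq_bot_or_top W hW _ hinv with hbot | htop
  · exact absurd hbot hc
  · ext v
    have hv : v ∈ Module.End.eigenspace u c := htop ▸ Submodule.mem_top
    rw [Module.End.mem_eigenspace_iff] at hv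
    simpa using hv

lemma dvd_finrank_aux {K : Type} [Group K]
    {U : Type} [AddCommGroup U] [Module ℂ U] [FiniteDimensional ℂ U]
    (τr : Representation ℂ K U)
    (hsimp : ∀ p : Submodule ℂ U, (∀ n, ∀ v ∈ p, τr n v ∈ p) → p = ⊥ ∨ p = ⊤) :
    ∀ (d : ℕ) (V : Type) (_ : AddCommGroup V) (_ : Module ℂ V) (_ : FiniteDimensional ℂ V),
      finrank ℂ V = d →
      ∀ (r : Representation ℂ K V) (ι : Type) (σ : ι → K → K)
        (_ : ∀ i, Function.Surjective (σ i))
        (ψ : ι → U →ₗ[ℂ] V) (_ : ∀ i n, r n ∘ₗ ψ i = ψ i ∘ₗ τr (σ i n))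
        (_ : (⨆ i, LinearMap.range (ψ i)) = ⊤),
      finrank ℂ U ∣ finrank ℂ V := by
  intro d
  induction d using Nat.strong_induction_on with
  | _ d IH =>
    intro V _ _ _ hd r ι σ hσ ψ hequi hspan
    by_cases hall : ∀ i, ψ i = 0
    · have : (⊤ : Submodule ℂ V) = ⊥ := by
        rw [← hspan]
        simp [hall]
      have hsub : Subsingleton V := by
        constructor
        intro a b
        have ha : a ∈ (⊥ : Submodule ℂ V) := this ▸ Submodule.mem_top
        have hb : b ∈ (⊥ : Submodule ℂ V) := this ▸ Submodule.mem_top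
        rw [Submodule.mem_bot] at ha hb
        rw [ha, hb]
      have h0 : finrank ℂ V = 0 := finrank_zero_iff.2 hsub
      rw [h0]
      exact dvd_zero _
    · push_neg at hall
      obtain ⟨i₀, hi₀⟩ := hall
      -- kernel of ψ i₀ is invariant
      have hker : ∀ n, ∀ v ∈ LinearMap.ker (ψ i₀), τr n v ∈ LinearMap.ker (ψ i₀) := by
        intro n v hv
        obtain ⟨n', hn'⟩ := hσ i₀ n
        rw [LinearMap.mem_ker] at hv ⊢
        have := congrArg (fun (f : U →ₗ[ℂ] V) => f v) (hequi i₀ n')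
        simp only [LinearMap.comp_apply] at this
        rw [hn'] at this
        rw [← this, hv, map_zero]
      rcases hsimp _ hker with hkbot | hktop
      · -- ψ i₀ injective
        have hinj : Function.Injective (ψ i₀) := LinearMap.ker_eq_bot.1 hkbot
        set W0 := LinearMap.range (ψ i₀) with hW0
        have hW0rank : finrank ℂ W0 = finrank ℂ U := LinearMap.finrank_range_of_inj hinj
        have hW0inv : ∀ n : K, ∀ v ∈ W0, r n v ∈ W0 := by
          rintro n _ ⟨u, rfl⟩
          refine ⟨τr (σ i₀ n) u, ?_⟩
          have := congrArg (fun (f : U →ₗ[ℂ] V) => f u) (hequi i₀ n)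
          simpa using this.symm
        have hle : ∀ n : K, W0 ≤ Submodule.comap (r n) W0 := fun n v hv => hW0inv n v hv
        -- quotient representation
        let rQ : Representation ℂ K (V ⧸ W0) :=
          { toFun := fun n => Submodule.mapQ W0 W0 (r n) (hle n)
            map_one' := by
              apply Submodule.linearMap_qext
              ext v
              simp
            map_mul' := fun a b => by
              apply Submodule.linearMap_qext
              ext v
              simp }
        have hrQ : ∀ n, rQ n ∘ₗ W0.mkQ = W0.mkQ ∘ₗ r n := fun n =>
          Submodule.mapQ_mkQ (f := r n) (h := hle n)
        let ψ' : ι → U →ₗ[ℂ] (V ⧸ W0) := fun i => W0.mkQ ∘ₗ ψ i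
        have hequi' : ∀ i n, rQ n ∘ₗ ψ' i = ψ' i ∘ₗ τr (σ i n) := by
          intro i n
          calc rQ n ∘ₗ (W0.mkQ ∘ₗ ψ i) = (rQ n ∘ₗ W0.mkQ) ∘ₗ ψ i := by rw [LinearMap.comp_assoc]
          _ = (W0.mkQ ∘ₗ r n) ∘ₗ ψ i := by rw [hrQ]
          _ = W0.mkQ ∘ₗ (r n ∘ₗ ψ i) := by rw [LinearMap.comp_assoc]
          _ = W0.mkQ ∘ₗ (ψ i ∘ₗ τr (σ i n)) := by rw [hequi]
          _ = (W0.mkQ ∘ₗ ψ i) ∘ₗ τr (σ i n) := by rw [LinearMap.comp_assoc]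
        have hspan' : (⨆ i, LinearMap.range (ψ' i)) = ⊤ := by
          have : ∀ i, LinearMap.range (ψ' i) = Submodule.map W0.mkQ (LinearMap.range (ψ i)) :=
            fun i => LinearMap.range_comp _ _
          calc (⨆ i, LinearMap.range (ψ' i))
              = ⨆ i, Submodule.map W0.mkQ (LinearMap.range (ψ i)) := iSup_congr this
          _ = Submodule.map W0.mkQ (⨆ i, LinearMap.range (ψ i)) := (Submodule.map_iSup _ _).symm
          _ = Submodule.map W0.mkQ ⊤ := by rw [hspan]
          _ = ⊤ := by rw [Submodule.map_top, Submodule.range_mkQ]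
        have hUpos : 0 < finrank ℂ U := by
          rcases Nat.eq_zero_or_pos (finrank ℂ U) with h0 | h
          · exfalso
            have : Subsingleton U := finrank_zero_iff.1 h0
            exact hi₀ (LinearMap.ext fun u => by rw [Subsingleton.elim u 0]; simp)
          · exact h
        have hquot : finrank ℂ (V ⧸ W0) + finrank ℂ W0 = finrank ℂ V :=
          Submodule.finrank_quotient_add_finrank W0
        have hlt : finrank ℂ (V ⧸ W0) < d := by omega
        have hdvd := IH _ hlt (V ⧸ W0) inferInstance inferInstance inferInstance rfl
          rQ ι σ hσ ψ' hequi' hspan'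
        rw [← hquot, hW0rank]
        exact Nat.dvd_add hdvd (dvd_refl _)
      · exact absurd (LinearMap.ker_eq_top.1 hktop) hi₀

end CliffordAux

end CliffordAux

open CliffordAux

/-- Clifford theory: if an irreducible character `χ_τ` of a normal subgroup `N` occurs in the
restriction of an irreducible character `χ_ρ` of `G`, and the `G`-conjugacy class of `x ∈ N`
does not split in `N`, then `χ_ρ(x) = m · χ_τ(x)` for a positive integer `m`; in particular,
`χ_ρ(x) ≠ 0 ↔ χ_τ(x) ≠ 0`. -/
theorem stmt_6 (G : Type) [Group G] [Fintype G] (N : Subgroup G) [N.Normal] [Fintype N]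
    (ρ : FDRep ℂ G) (hρ : Simple ρ) (τ : FDRep ℂ N) (hτ : Simple τ)
    (hocc : (∑ y : N, ρ.character (y : G) * (starRingEnd ℂ) (τ.character y)) ≠ 0)
    (x : N) (hnosplit : ∀ g : G, ∃ h : N, g * (x : G) * g⁻¹ = (h : G) * (x : G) * (h : G)⁻¹) :
    (∃ m : ℕ, 0 < m ∧ ρ.character (x : G) = (m : ℂ) * τ.character x) ∧
      (ρ.character (x : G) ≠ 0 ↔ τ.character x ≠ 0) := by
  classical
  haveI := hρ; haveI := hτ
  -- the restriction of ρ to N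
  let ρN : FDRep ℂ N := FDRep.of (ρ.ρ.comp N.subtype)
  have hρNchar : ∀ y : N, ρN.character y = ρ.character (y : G) := fun y => rfl
  haveI : Invertible ((Fintype.card N : ℂ)) :=
    invertibleOfNonzero (Nat.cast_ne_zero.2 Fintype.card_ne_zero)
  -- Step 1: extract a nonzero N-equivariant map φ : τ → Res ρ from hocc
  have hsum : (∑ y : N, (FDRep.of (Representation.linHom τ.ρ ρN.ρ)).character y) ≠ 0 := by
    have : ∀ y : N, (FDRep.of (Representation.linHom τ.ρ ρN.ρ)).character y
        = ρ.character (y : G) * (starRingEnd ℂ) (τ.character y) := by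
      intro y
      rw [FDRep.char_linHom τ ρN y, char_inv_eq_conj τ y, hρNchar, mul_comm]
    rw [Finset.sum_congr rfl fun y _ => this y]
    exact hocc
  have havg := FDRep.average_char_eq_finrank_invariants
    (FDRep.of (Representation.linHom τ.ρ ρN.ρ))
  have hfr : (finrank ℂ (Representation.invariants (FDRep.of (Representation.linHom τ.ρ ρN.ρ)).ρ) : ℂ) ≠ 0 := by
    rw [← havg]
    intro h0
    exact hsum (by
      have hinv0 : (⅟(Fintype.card N : ℂ)) ≠ 0 := Invertible.ne_zero _
      exact (mul_eq_zero.1 h0).resolve_left (inv_ne_zero (Nat.cast_ne_zero.2 Nat.card_pos.ne')))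
  have hinvne : Representation.invariants (FDRep.of (Representation.linHom τ.ρ ρN.ρ)).ρ ≠ ⊥ := by
    intro hb
    rw [hb] at hfr
    simp [finrank_bot] at hfr
  obtain ⟨φ₀, hφmem, hφ00⟩ := Submodule.exists_mem_ne_zero_of_ne_bot hinvne
  let φ : τ →ₗ[ℂ] ρ := φ₀
  have hφ0 : φ ≠ 0 := hφ00
  have hφ : ∀ n : N, ρ.ρ (n : G) ∘ₗ φ = φ ∘ₗ τ.ρ n := by
    intro n
    have h1 : (Representation.linHom τ.ρ ρN.ρ) n φ = φ := hφmem n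
    rw [Representation.linHom_apply] at h1
    apply LinearMap.ext
    intro u
    have h2 := congrArg (fun (f : _ →ₗ[ℂ] _) => f (τ.ρ n u)) h1
    simp only [LinearMap.comp_apply] at h2 ⊢
    have h3 : τ.ρ n⁻¹ (τ.ρ n u) = u := by
      have hmm : τ.ρ n⁻¹ * τ.ρ n = 1 := by rw [← _root_.map_mul, inv_mul_cancel, _root_.map_one]
      calc τ.ρ n⁻¹ (τ.ρ n u) = (τ.ρ n⁻¹ * τ.ρ n) u := rfl
      _ = u := by rw [hmm]; rfl
    rw [h3] at h2
    exact h2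
  -- Step 2: divisibility dim τ ∣ dim ρ
  have hτsimp : ∀ p : Submodule ℂ τ, (∀ n, ∀ v ∈ p, τ.ρ n v ∈ p) → p = ⊥ ∨ p = ⊤ :=
    invariant_submodule_eq_bot_or_top τ hτ
  have hρsimp : ∀ p : Submodule ℂ ρ, (∀ g, ∀ v ∈ p, ρ.ρ g v ∈ p) → p = ⊥ ∨ p = ⊤ :=
    invariant_submodule_eq_bot_or_top ρ hρ
  have hconjmem : ∀ (g : G) (n : N), g⁻¹ * (n : G) * g ∈ N := by
    intro g n
    have := ‹N.Normal›.conj_mem (n : G) n.2 g⁻¹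
    simpa using this
  let σc : G → N → N := fun g n => ⟨g⁻¹ * (n : G) * g, hconjmem g n⟩
  have hσc : ∀ g, Function.Surjective (σc g) := by
    intro g n
    refine ⟨⟨g * (n : G) * g⁻¹, by simpa using ‹N.Normal›.conj_mem (n : G) n.2 g⟩, ?_⟩
    apply Subtype.ext
    simp only [σc]
    group
  let ψ : G → (τ →ₗ[ℂ] ρ) := fun g => ρ.ρ g ∘ₗ φ
  have hψequi : ∀ (g : G) (n : N), (ρ.ρ.comp N.subtype) n ∘ₗ ψ g = ψ g ∘ₗ τ.ρ (σc g n) := by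
    intro g n
    have h1 : ρ.ρ ((σc g n : N) : G) ∘ₗ φ = φ ∘ₗ τ.ρ (σc g n) := hφ (σc g n)
    have h2 : ((n : G)) * g = g * (((σc g n : N)) : G) := by
      simp only [σc]
      group
    calc (ρ.ρ.comp N.subtype) n ∘ₗ (ρ.ρ g ∘ₗ φ)
        = (ρ.ρ ((n : G)) * ρ.ρ g) ∘ₗ φ := rfl
    _ = ρ.ρ ((n : G) * g) ∘ₗ φ := by rw [_root_.map_mul]
    _ = ρ.ρ (g * ((σc g n : N) : G)) ∘ₗ φ := by rw [h2]
    _ = (ρ.ρ g * ρ.ρ ((σc g n : N) : G)) ∘ₗ φ := by rw [_root_.map_mul]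
    _ = ρ.ρ g ∘ₗ (ρ.ρ ((σc g n : N) : G) ∘ₗ φ) := rfl
    _ = ρ.ρ g ∘ₗ (φ ∘ₗ τ.ρ (σc g n)) := by rw [h1]
    _ = (ρ.ρ g ∘ₗ φ) ∘ₗ τ.ρ (σc g n) := rfl
  have hψspan : (⨆ g : G, LinearMap.range (ψ g)) = ⊤ := by
    set S := ⨆ g : G, LinearMap.range (ψ g) with hS
    have hSinv : ∀ a : G, ∀ v ∈ S, ρ.ρ a v ∈ S := by
      intro a v hv
      have hmap : Submodule.map (ρ.ρ a) S ≤ S := by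
        rw [hS, Submodule.map_iSup]
        refine iSup_le fun g => ?_
        have : Submodule.map (ρ.ρ a) (LinearMap.range (ψ g)) = LinearMap.range (ψ (a * g)) := by
          rw [← LinearMap.range_comp]
          have : ρ.ρ a ∘ₗ ψ g = ψ (a * g) := by
            simp only [ψ]
            rw [← LinearMap.comp_assoc]
            rw [show ρ.ρ a ∘ₗ ρ.ρ g = ρ.ρ (a * g) from by rw [_root_.map_mul]; rfl]
          rw [this]
        rw [this]
        exact le_iSup (fun g => LinearMap.range (ψ g)) (a * g)
      exact hmap (Submodule.mem_map_of_mem hv)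
    rcases hρsimp S hSinv with hbot | htop
    · exfalso
      apply hφ0
      have hψ1 : ψ 1 = φ := by
        simp only [ψ, _root_.map_one]
        rfl
      have : LinearMap.range (ψ 1) ≤ S := le_iSup (fun g => LinearMap.range (ψ g)) 1
      rw [hbot, hψ1] at this
      apply LinearMap.ext
      intro u
      have := this ⟨u, rfl⟩
      rwa [Submodule.mem_bot] at this
    · exact htop
  have hdvd : finrank ℂ τ ∣ finrank ℂ ρ :=
    dvd_finrank_aux τ.ρ hτsimp (finrank ℂ ρ) ρ inferInstance inferInstance inferInstance rfl
      (ρ.ρ.comp N.subtype) G σc hσc ψ hψequi hψspan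
  -- Step 3: central element argument
  have hmemC : ∀ g : G, g * (x : G) * g⁻¹ ∈ N := by
    intro g
    obtain ⟨h, hh⟩ := hnosplit g
    rw [hh]
    exact mul_mem (mul_mem h.2 x.2) (inv_mem h.2)
  let η : G → N := fun g => ⟨g * (x : G) * g⁻¹, hmemC g⟩
  let Zρ : ρ →ₗ[ℂ] ρ := ∑ g : G, ρ.ρ (g * (x : G) * g⁻¹)
  have hZρcomm : ∀ a : G, ρ.ρ a ∘ₗ Zρ = Zρ ∘ₗ ρ.ρ a := by
    intro a
    show ρ.ρ a * Zρ = Zρ * ρ.ρ a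
    simp only [Zρ, Finset.mul_sum, Finset.sum_mul]
    refine Fintype.sum_bijective (fun g => a * g) (Group.mulLeft_bijective a) _ _ ?_
    intro g
    rw [← _root_.map_mul, ← _root_.map_mul]
    exact congrArg ρ.ρ (by group)
  obtain ⟨cρ, hcρ⟩ := commuting_endo_scalar ρ hρ Zρ hZρcomm
  have E1 : (Fintype.card G : ℂ) * ρ.character (x : G) = cρ * (finrank ℂ ρ : ℂ) := by
    have htr : LinearMap.trace ℂ ρ Zρ = (Fintype.card G : ℂ) * ρ.character (x : G) := by
      simp only [Zρ, map_sum]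
      have : ∀ g : G, LinearMap.trace ℂ ρ (ρ.ρ (g * (x : G) * g⁻¹)) = ρ.character (x : G) :=
        fun g => FDRep.char_conj ρ (x : G) g
      rw [Finset.sum_congr rfl fun g _ => this g, Finset.sum_const, Finset.card_univ,
        nsmul_eq_mul]
    rw [← htr, hcρ, map_smul, LinearMap.trace_id, smul_eq_mul]
  let Zτ : τ →ₗ[ℂ] τ := ∑ g : G, τ.ρ (η g)
  have hZτcomm : ∀ b : N, τ.ρ b ∘ₗ Zτ = Zτ ∘ₗ τ.ρ b := by
    intro b
    show τ.ρ b * Zτ = Zτ * τ.ρ b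
    simp only [Zτ, Finset.mul_sum, Finset.sum_mul]
    refine Fintype.sum_bijective (fun g => (b : G) * g) (Group.mulLeft_bijective (b : G)) _ _ ?_
    intro g
    rw [← _root_.map_mul, ← _root_.map_mul]
    refine congrArg τ.ρ (Subtype.ext ?_)
    show (b : G) * ((g * (x : G) * g⁻¹)) = (((b : G) * g) * (x : G) * ((b : G) * g)⁻¹) * (b : G)
    group
  obtain ⟨cτ, hcτ⟩ := commuting_endo_scalar τ hτ Zτ hZτcomm
  have E2 : (Fintype.card G : ℂ) * τ.character x = cτ * (finrank ℂ τ : ℂ) := by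
    have htr : LinearMap.trace ℂ τ Zτ = (Fintype.card G : ℂ) * τ.character x := by
      simp only [Zτ, map_sum]
      have : ∀ g : G, LinearMap.trace ℂ τ (τ.ρ (η g)) = τ.character x := by
        intro g
        obtain ⟨h, hh⟩ := hnosplit g
        have hηg : η g = h * x * h⁻¹ := by
          apply Subtype.ext
          rw [show ((h * x * h⁻¹ : N) : G) = (h : G) * (x : G) * (h : G)⁻¹ from rfl]
          exact hh
        rw [show LinearMap.trace ℂ τ (τ.ρ (η g)) = τ.character (η g) from rfl, hηg]
        exact FDRep.char_conj τ x h
      rw [Finset.sum_congr rfl fun g _ => this g, Finset.sum_const, Finset.card_univ,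
        nsmul_eq_mul]
    rw [← htr, hcτ, map_smul, LinearMap.trace_id, smul_eq_mul]
  -- link the two scalars through φ
  have hlink : Zρ ∘ₗ φ = φ ∘ₗ Zτ := by
    apply LinearMap.ext
    intro u
    have hL : (Zρ ∘ₗ φ) u = ∑ g : G, ρ.ρ (g * (x : G) * g⁻¹) (φ u) := by
      simp only [LinearMap.comp_apply, Zρ, LinearMap.sum_apply]
    have hR : (φ ∘ₗ Zτ) u = ∑ g : G, φ (τ.ρ (η g) u) := by
      simp only [LinearMap.comp_apply, Zτ, LinearMap.sum_apply, map_sum]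
    rw [hL, hR]
    refine Finset.sum_congr rfl fun g _ => ?_
    have := LinearMap.congr_fun (hφ (η g)) u
    exact this
  have hcc : cρ = cτ := by
    rw [hcρ, hcτ] at hlink
    rw [LinearMap.smul_comp, LinearMap.comp_smul, LinearMap.id_comp, LinearMap.comp_id] at hlink
    by_contra hne
    exact hφ0 ((smul_eq_zero.1 (by rw [sub_smul, hlink, sub_self] : (cρ - cτ) • φ = 0)).resolve_left
      (sub_ne_zero.2 hne))
  -- Step 4: conclusion
  have hdτpos := finrank_pos_of_simple τ hτ
  have hdρpos := finrank_pos_of_simple ρ hρ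
  have hGne : (Fintype.card G : ℂ) ≠ 0 := Nat.cast_ne_zero.2 Fintype.card_ne_zero
  have key : ρ.character (x : G) * (finrank ℂ τ : ℂ) = τ.character x * (finrank ℂ ρ : ℂ) := by
    have h1 : (Fintype.card G : ℂ) * (ρ.character (x : G) * (finrank ℂ τ : ℂ))
        = (Fintype.card G : ℂ) * (τ.character x * (finrank ℂ ρ : ℂ)) := by
      calc (Fintype.card G : ℂ) * (ρ.character (x : G) * (finrank ℂ τ : ℂ))
          = ((Fintype.card G : ℂ) * ρ.character (x : G)) * (finrank ℂ τ : ℂ) := by ring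
      _ = cρ * (finrank ℂ ρ : ℂ) * (finrank ℂ τ : ℂ) := by rw [E1]
      _ = (cτ * (finrank ℂ τ : ℂ)) * (finrank ℂ ρ : ℂ) := by rw [hcc]; ring
      _ = ((Fintype.card G : ℂ) * τ.character x) * (finrank ℂ ρ : ℂ) := by rw [E2]
      _ = (Fintype.card G : ℂ) * (τ.character x * (finrank ℂ ρ : ℂ)) := by ring
    exact mul_left_cancel₀ hGne h1
  obtain ⟨m, hm⟩ := hdvd
  have hmpos : 0 < m := by
    rcases Nat.eq_zero_or_pos m with h0 | h
    · exfalso; rw [h0, Nat.mul_zero] at hm; omega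
    · exact h
  have hdτne : ((finrank ℂ τ : ℂ)) ≠ 0 := Nat.cast_ne_zero.2 hdτpos.ne'
  have hmain : ρ.character (x : G) = (m : ℂ) * τ.character x := by
    have h2 : ρ.character (x : G) * (finrank ℂ τ : ℂ)
        = ((m : ℂ) * τ.character x) * (finrank ℂ τ : ℂ) := by
      rw [key, hm]
      push_cast
      ring
    exact mul_right_cancel₀ hdτne h2
  refine ⟨⟨m, hmpos, hmain⟩, ?_⟩
  constructor
  · intro hne h0
    rw [hmain, h0, mul_zero] at hne
    exact hne rfl
  · intro hne h0
    rw [hmain] at h0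
    rcases mul_eq_zero.1 h0 with hm0 | ht0
    · exact (Nat.cast_ne_zero.2 hmpos.ne' : (m:ℂ) ≠ 0) hm0
    · exact hne ht0
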